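/- Assume Υ(k) ≥ 20 (so that each p^(i) is non-zero). Then for any distinct i, j ∈ [k], the normalised approximate centres satisfy ‖p^(i)/‖p^(i)‖ − p^(j)/‖p^(j)‖‖² ≥ 2 − 20/Υ(k). -/

import Mathlib

set_option maxHeartbeats 2000000


open Finset
open scoped RealInnerProductSpace

/-- The volume of a vertex set: the sum of the degrees of its vertices. -/
noncomputable def gVol {V : Type*} (deg : V → ℝ) (S : Finset V) : ℝ := ∑ u ∈ S, deg u

/-- The total edge weight between two vertex sets. -/
noncomputable def gCut {V : Type*} (w : V → V → ℝ) (A B : Finset V) : ℝ :=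
  ∑ u ∈ A, ∑ v ∈ B, w u v

/-- The conductance of a vertex set. -/
noncomputable def gCond {V : Type*} [Fintype V] [DecidableEq V]
    (w : V → V → ℝ) (deg : V → ℝ) (S : Finset V) : ℝ :=
  gCut w S Sᶜ / min (gVol deg S) (gVol deg Sᶜ)

/-- `S : Fin k → Finset V` is a partition of `V` into `k` non-empty sets. -/
def IsPartition {V : Type*} [Fintype V] {k : ℕ} (S : Fin k → Finset V) : Prop :=
  (∀ i, (S i).Nonempty) ∧ (∀ i j, i ≠ j → Disjoint (S i) (S j)) ∧ ∀ v, ∃ i, v ∈ S i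

/-- The vector `D^{1/2} χ_S`. -/
noncomputable def indVec {n : ℕ} (deg : Fin n → ℝ) (S : Finset (Fin n)) :
    EuclideanSpace ℝ (Fin n) :=
  WithLp.toLp 2 (fun v => if v ∈ S then Real.sqrt (deg v) else 0)

/-- The normalised indicator vector `D^{1/2} χ_S / ‖D^{1/2} χ_S‖` of a cluster `S`. -/
noncomputable def gbarVec {n : ℕ} (deg : Fin n → ℝ) (S : Finset (Fin n)) :
    EuclideanSpace ℝ (Fin n) :=
  ‖indVec deg S‖⁻¹ • indVec deg S

lemma quadform_eq {n : ℕ} (w : Fin n → Fin n → ℝ)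
    (hsymm : ∀ u v, w u v = w v u)
    (deg : Fin n → ℝ) (hdeg : ∀ u, deg u = ∑ v, w u v)
    (hdegpos : ∀ u, 0 < deg u)
    (N : Matrix (Fin n) (Fin n) ℝ)
    (hN : ∀ u v, N u v =
      (if u = v then (1 : ℝ) else 0) - w u v / (Real.sqrt (deg u) * Real.sqrt (deg v)))
    (x : Fin n → ℝ) :
    ∑ u, x u * N.mulVec x u =
      (∑ u, ∑ v, w u v * (x u / Real.sqrt (deg u) - x v / Real.sqrt (deg v)) ^ 2) / 2 := by
  have hs : ∀ u, Real.sqrt (deg u) ≠ 0 := fun u => Real.sqrt_ne_zero'.mpr (hdegpos u)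
  set y : Fin n → ℝ := fun u => x u / Real.sqrt (deg u) with hy
  have hA : ∀ u, ∑ v, w u v * y u ^ 2 = deg u * y u ^ 2 := by
    intro u; rw [← Finset.sum_mul, ← hdeg u]
  have hB : (∑ u, ∑ v, w u v * y v ^ 2) = ∑ u, deg u * y u ^ 2 := by
    rw [Finset.sum_comm]
    refine Finset.sum_congr rfl fun v _ => ?_
    rw [← Finset.sum_mul]
    congr 1
    rw [hdeg v]
    exact Finset.sum_congr rfl fun u _ => hsymm u v
  have lhs : ∑ u, x u * N.mulVec x u =
      (∑ u, deg u * y u ^ 2) - ∑ u, ∑ v, w u v * (y u * y v) := by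
    rw [← Finset.sum_sub_distrib]
    refine Finset.sum_congr rfl fun u _ => ?_
    have hmv : N.mulVec x u = x u - ∑ v, w u v / (Real.sqrt (deg u) * Real.sqrt (deg v)) * x v := by
      have : N.mulVec x u = ∑ v, ((if u = v then (1:ℝ) else 0) * x v
          - w u v / (Real.sqrt (deg u) * Real.sqrt (deg v)) * x v) := by
        simp only [Matrix.mulVec, dotProduct]
        exact Finset.sum_congr rfl fun v _ => by show N u v * x v = _; rw [hN u v, sub_mul]
      rw [this, Finset.sum_sub_distrib]
      congr 1
      simp
    rw [hmv, mul_sub, Finset.mul_sum]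
    have h3 : ∀ v, x u * (w u v / (Real.sqrt (deg u) * Real.sqrt (deg v)) * x v)
        = w u v * (y u * y v) := by
      intro v
      have hu := hs u; have hv := hs v
      simp only [hy]
      field_simp
    have h4 : x u * x u = deg u * y u ^ 2 := by
      have hu := hs u; have hd := (hdegpos u).ne'
      simp only [hy]
      rw [div_pow, Real.sq_sqrt (hdegpos u).le]
      field_simp
    simp_rw [h3]
    rw [h4]
  have rhs : ∑ u, ∑ v, w u v * (y u - y v) ^ 2 =
      2 * ((∑ u, deg u * y u ^ 2) - ∑ u, ∑ v, w u v * (y u * y v)) := by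
    have expand : ∀ u v : Fin n, w u v * (y u - y v) ^ 2 =
        w u v * y u ^ 2 + w u v * y v ^ 2 - 2 * (w u v * (y u * y v)) := by
      intro u v; ring
    simp_rw [expand, Finset.sum_sub_distrib, Finset.sum_add_distrib, hA, hB, ← Finset.mul_sum]
    ring
  rw [lhs, rhs]; ring

/-- Normalised approximate centres are far apart (Lemma 4.7). -/
theorem normalised_centre_distance
    {n k : ℕ} (hk : 0 < k) (hkn : k < n)
    (w : Fin n → Fin n → ℝ)
    (hsymm : ∀ u v, w u v = w v u)
    (hnonneg : ∀ u v, 0 ≤ w u v)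
    (deg : Fin n → ℝ) (hdeg : ∀ u, deg u = ∑ v, w u v)
    (hdegpos : ∀ u, 0 < deg u)
    -- the normalised Laplacian `N = I - D^{-1/2} A D^{-1/2}`
    (N : Matrix (Fin n) (Fin n) ℝ)
    (hN : ∀ u v, N u v =
      (if u = v then (1 : ℝ) else 0) - w u v / (Real.sqrt (deg u) * Real.sqrt (deg v)))
    -- its eigenvalues `lam 0 ≤ … ≤ lam (n-1)` with orthonormal eigenvectors `f`
    (lam : Fin n → ℝ) (hlam : Monotone lam)
    (f : Fin n → EuclideanSpace ℝ (Fin n))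
    (hf : Orthonormal ℝ f)
    (heig : ∀ i, N.mulVec (f i) = lam i • (f i))
    -- `S` is a partition attaining the `k`-way expansion `ρ(k)`
    (S : Fin k → Finset (Fin n)) (hS : IsPartition S)
    (rho : ℝ)
    (hrho : rho = ⨆ i, gCond w deg (S i))
    (hopt : ∀ T : Fin k → Finset (Fin n), IsPartition T → rho ≤ ⨆ i, gCond w deg (T i))
    (hrhopos : 0 < rho)
    (hlampos : 0 < lam ⟨k, hkn⟩)
    -- `Υ(k) = λ_{k+1} / ρ(k)`
    (Upsilon : ℝ) (hU : Upsilon = lam ⟨k, hkn⟩ / rho)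
    -- the normalised indicator vectors of the clusters
    (gbar : Fin k → EuclideanSpace ℝ (Fin n))
    (hgbar : ∀ i, gbar i = gbarVec deg (S i))
    -- the approximate cluster centres `p^(i)(j) = ⟨f_j, ḡ_i⟩ / √vol(S_i)`
    (p : Fin k → EuclideanSpace ℝ (Fin k))
    (hp : ∀ i j, p i j = ⟪f (Fin.castLE hkn.le j), gbar i⟫ / Real.sqrt (gVol deg (S i)))
    (hU20 : 20 ≤ Upsilon) :
    ∀ i j : Fin k, i ≠ j →
      2 - 20 / Upsilon ≤ ‖‖p i‖⁻¹ • p i - ‖p j‖⁻¹ • p j‖ ^ 2 := by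
  intro i j hij
  have hs : ∀ u, Real.sqrt (deg u) ≠ 0 := fun u => Real.sqrt_ne_zero'.mpr (hdegpos u)
  have hinner : ∀ x y : EuclideanSpace ℝ (Fin n), ⟪x, y⟫ = ∑ u, x u * y u := fun x y => by
    simp [PiLp.inner_apply, RCLike.inner_apply, conj_trivial]
    exact Finset.sum_congr rfl fun _ _ => mul_comm _ _
  have hinnerk : ∀ x y : EuclideanSpace ℝ (Fin k), ⟪x, y⟫ = ∑ u, x u * y u := fun x y => by
    simp [PiLp.inner_apply, RCLike.inner_apply, conj_trivial]
    exact Finset.sum_congr rfl fun _ _ => mul_comm _ _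
  have hnormsq : ∀ x : EuclideanSpace ℝ (Fin n), ‖x‖ ^ 2 = ∑ u, x u ^ 2 := fun x => by
    rw [EuclideanSpace.norm_eq, Real.sq_sqrt (by positivity)]
    simp [sq_abs]
  have hnormsqk : ∀ x : EuclideanSpace ℝ (Fin k), ‖x‖ ^ 2 = ∑ u, x u ^ 2 := fun x => by
    rw [EuclideanSpace.norm_eq, Real.sq_sqrt (by positivity)]
    simp [sq_abs]
  haveI : Nonempty (Fin n) := ⟨⟨k, hkn⟩⟩
  have hcard : Fintype.card (Fin n) = Module.finrank ℝ (EuclideanSpace ℝ (Fin n)) := by simp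
  let b : OrthonormalBasis (Fin n) ℝ (EuclideanSpace ℝ (Fin n)) :=
    (basisOfOrthonormalOfCardEqFinrank hf hcard).toOrthonormalBasis
      (by rw [coe_basisOfOrthonormalOfCardEqFinrank]; exact hf)
  have hb : ∀ t, b t = f t := fun t => by
    simp only [b, Module.Basis.coe_toOrthonormalBasis, coe_basisOfOrthonormalOfCardEqFinrank]
  have hpars : ∀ x y : EuclideanSpace ℝ (Fin n),
      ∑ t, (⟪f t, x⟫ : ℝ) * ⟪f t, y⟫ = ⟪x, y⟫ := by
    intro x y
    have h := b.sum_inner_mul_inner x y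
    calc ∑ t, (⟪f t, x⟫ : ℝ) * ⟪f t, y⟫ = ∑ t, (⟪x, b t⟫ : ℝ) * ⟪b t, y⟫ := by
          refine Finset.sum_congr rfl fun t _ => ?_
          rw [hb, real_inner_comm x (f t)]
      _ = ⟪x, y⟫ := h
  have hexp : ∀ x : EuclideanSpace ℝ (Fin n), (∑ t, (⟪f t, x⟫ : ℝ) • f t) = x := by
    intro x
    have h := b.sum_repr x
    calc (∑ t, (⟪f t, x⟫ : ℝ) • f t) = ∑ t, b.repr x t • b t := by
          refine Finset.sum_congr rfl fun t _ => ?_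
          rw [b.repr_apply_apply, hb]
      _ = x := h
  -- basic volume facts
  have hvolpos : ∀ i0, 0 < gVol deg (S i0) :=
    fun i0 => Finset.sum_pos (fun u _ => hdegpos u) (hS.1 i0)
  have hvs : ∀ i0 : Fin k, Real.sqrt (gVol deg (S i0)) ≠ 0 :=
    fun i0 => Real.sqrt_ne_zero'.mpr (hvolpos i0)
  have hindnorm : ∀ i0 : Fin k, ‖indVec deg (S i0)‖ = Real.sqrt (gVol deg (S i0)) := by
    intro i0
    rw [EuclideanSpace.norm_eq]
    congr 1
    have h1 : ∀ u, ‖indVec deg (S i0) u‖ ^ 2 = if u ∈ S i0 then deg u else 0 := by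
      intro u
      simp only [indVec, WithLp.ofLp_toLp]
      split
      · rw [Real.norm_eq_abs, sq_abs, Real.sq_sqrt (hdegpos _).le]
      · simp
    rw [Finset.sum_congr rfl fun u _ => h1 u, Finset.sum_ite_mem, Finset.univ_inter]
    rfl
  have hgbar_apply : ∀ (i0 : Fin k) u, gbar i0 u =
      (if u ∈ S i0 then Real.sqrt (deg u) / Real.sqrt (gVol deg (S i0)) else 0) := by
    intro i0 u
    rw [hgbar]
    have h2 : gbarVec deg (S i0) u = ‖indVec deg (S i0)‖⁻¹ * indVec deg (S i0) u := rfl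
    rw [h2, hindnorm]
    simp only [indVec, WithLp.ofLp_toLp]
    split
    · rw [inv_mul_eq_div]
    · rw [mul_zero]
  have hgunit : ∀ i0 : Fin k, ‖gbar i0‖ = 1 := by
    intro i0
    have h1 : ‖gbar i0‖ ^ 2 = 1 := by
      rw [hnormsq]
      have h2 : ∀ u, gbar i0 u ^ 2 = if u ∈ S i0 then deg u / gVol deg (S i0) else 0 := by
        intro u
        rw [hgbar_apply]
        split
        · rw [div_pow, Real.sq_sqrt (hdegpos _).le, Real.sq_sqrt (hvolpos i0).le]
        · exact zero_pow two_ne_zero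
      rw [Finset.sum_congr rfl fun u _ => h2 u, Finset.sum_ite_mem, Finset.univ_inter,
        ← Finset.sum_div]
      exact div_self (hvolpos i0).ne'
    have := Real.sqrt_sq (norm_nonneg (gbar i0))
    rw [← this, h1, Real.sqrt_one]
  -- eigen-decomposition of the quadratic form
  have hmulvec : ∀ (g : EuclideanSpace ℝ (Fin n)) (u : Fin n),
      N.mulVec g u = ∑ t, (⟪f t, g⟫ : ℝ) * (lam t * f t u) := by
    intro g u
    have hgu : ∀ v, g v = ∑ t, (⟪f t, g⟫ : ℝ) * f t v := by
      intro v
      conv_lhs => rw [← hexp g]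
      rw [WithLp.ofLp_sum]; exact Finset.sum_apply v univ _
    have h1 : N.mulVec g u = ∑ v, N u v * g v := rfl
    rw [h1]
    have h2 : ∀ v, N u v * g v = ∑ t, (⟪f t, g⟫ : ℝ) * (N u v * f t v) := by
      intro v
      rw [hgu v, Finset.mul_sum]
      exact Finset.sum_congr rfl fun t _ => by ring
    rw [Finset.sum_congr rfl fun v _ => h2 v, Finset.sum_comm]
    refine Finset.sum_congr rfl fun t _ => ?_
    rw [← Finset.mul_sum]
    congr 1
    have h3 : ∑ v, N u v * f t v = N.mulVec (f t) u := rfl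
    rw [h3, heig t]
    rfl
  have hQ : ∀ i0 : Fin k, ∑ u, gbar i0 u * N.mulVec (gbar i0) u
      = ∑ t, lam t * (⟪f t, gbar i0⟫ : ℝ) ^ 2 := by
    intro i0
    simp_rw [hmulvec (gbar i0), Finset.mul_sum]
    rw [Finset.sum_comm]
    refine Finset.sum_congr rfl fun t _ => ?_
    have h1 : ∑ u, gbar i0 u * ((⟪f t, gbar i0⟫ : ℝ) * (lam t * f t u))
        = (⟪f t, gbar i0⟫ : ℝ) * lam t * ∑ u, f t u * gbar i0 u := by
      rw [Finset.mul_sum]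
      exact Finset.sum_congr rfl fun u _ => by ring
    rw [h1, ← hinner (f t) (gbar i0)]
    ring
  have hfnormsq : ∀ t, ∑ u, f t u ^ 2 = 1 := by
    intro t
    have h1 := hnormsq (f t)
    rw [hf.1 t] at h1
    simpa using h1.symm
  have hlamnn : ∀ t, 0 ≤ lam t := by
    intro t
    have hq := quadform_eq w hsymm deg hdeg hdegpos N hN (f t)
    have hLHS : ∑ u, f t u * N.mulVec (f t) u = lam t := by
      have h1 : ∀ u, N.mulVec (f t) u = lam t * f t u := fun u => by
        rw [heig t]; rfl
      simp_rw [h1]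
      have h2 : ∑ u, f t u * (lam t * f t u) = lam t * ∑ u, f t u ^ 2 := by
        rw [Finset.mul_sum]
        exact Finset.sum_congr rfl fun u _ => by ring
      rw [h2, hfnormsq t, mul_one]
    rw [hLHS] at hq
    rw [hq]
    have : ∀ u ∈ (univ : Finset (Fin n)), 0 ≤ ∑ v, w u v *
        (f t u / Real.sqrt (deg u) - f t v / Real.sqrt (deg v)) ^ 2 :=
      fun u _ => Finset.sum_nonneg fun v _ => mul_nonneg (hnonneg u v) (sq_nonneg _)
    have := Finset.sum_nonneg this
    linarith
  -- Rayleigh quotient of the indicator vectors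
  have hswap : ∀ (g : Fin n → ℝ) (T : Finset (Fin n)),
      ∑ v, (if v ∈ T then g v else 0) = ∑ v ∈ T, g v := by
    intro g T; rw [Finset.sum_ite_mem, Finset.univ_inter]
  have hswap' : ∀ (g : Fin n → ℝ) (T : Finset (Fin n)),
      ∑ v, (if v ∈ T then 0 else g v) = ∑ v ∈ Tᶜ, g v := by
    intro g T
    rw [← hswap g Tᶜ]
    refine Finset.sum_congr rfl fun v _ => ?_
    by_cases hv : v ∈ T <;> simp [hv]
  have hcutsymm : ∀ i0 : Fin k, gCut w ((S i0)ᶜ) (S i0) = gCut w (S i0) ((S i0)ᶜ) := by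
    intro i0
    rw [gCut, gCut, Finset.sum_comm]
    exact Finset.sum_congr rfl fun u _ => Finset.sum_congr rfl fun v _ => hsymm v u
  have hRay : ∀ i0 : Fin k, ∑ t, lam t * (⟪f t, gbar i0⟫ : ℝ) ^ 2
      = gCut w (S i0) ((S i0)ᶜ) / gVol deg (S i0) := by
    intro i0
    rw [← hQ i0, quadform_eq w hsymm deg hdeg hdegpos N hN (gbar i0)]
    have hterm : ∀ u, gbar i0 u / Real.sqrt (deg u)
        = if u ∈ S i0 then (Real.sqrt (gVol deg (S i0)))⁻¹ else 0 := by
      intro u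
      rw [hgbar_apply]
      split
      · rw [div_div, mul_comm, ← div_div, div_self (hs u), one_div]
      · exact zero_div _
    simp_rw [hterm]
    have hsq : ((Real.sqrt (gVol deg (S i0)))⁻¹) ^ 2 = (gVol deg (S i0))⁻¹ := by
      rw [inv_pow, Real.sq_sqrt (hvolpos i0).le]
    have hu1 : ∀ u, (∑ v, w u v * ((if u ∈ S i0 then (Real.sqrt (gVol deg (S i0)))⁻¹ else 0)
          - (if v ∈ S i0 then (Real.sqrt (gVol deg (S i0)))⁻¹ else 0)) ^ 2)
        = if u ∈ S i0 then ∑ v ∈ (S i0)ᶜ, w u v / gVol deg (S i0)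
          else ∑ v ∈ S i0, w u v / gVol deg (S i0) := by
      intro u
      by_cases hu : u ∈ S i0 <;> simp only [hu, if_true, if_false]
      · rw [← hswap' (fun v => w u v / gVol deg (S i0)) (S i0)]
        refine Finset.sum_congr rfl fun v _ => ?_
        by_cases hv : v ∈ S i0 <;> simp only [hv, if_true, if_false]
        · simp
        · rw [sub_zero, hsq, div_eq_mul_inv]
      · rw [← hswap (fun v => w u v / gVol deg (S i0)) (S i0)]
        refine Finset.sum_congr rfl fun v _ => ?_
        by_cases hv : v ∈ S i0 <;> simp only [hv, if_true, if_false]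
        · rw [zero_sub, neg_sq, hsq, div_eq_mul_inv]
        · simp
    rw [Finset.sum_congr rfl fun u _ => hu1 u]
    have hsplitS : (∑ u, (if u ∈ S i0 then ∑ v ∈ (S i0)ᶜ, w u v / gVol deg (S i0)
          else ∑ v ∈ S i0, w u v / gVol deg (S i0)))
        = (∑ u ∈ S i0, ∑ v ∈ (S i0)ᶜ, w u v / gVol deg (S i0))
          + ∑ u ∈ (S i0)ᶜ, ∑ v ∈ S i0, w u v / gVol deg (S i0) := by
      rw [← Finset.sum_add_sum_compl (S i0)]
      congr 1
      · exact Finset.sum_congr rfl fun u hu => if_pos hu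
      · exact Finset.sum_congr rfl fun u hu => if_neg (Finset.mem_compl.mp hu)
    rw [hsplitS]
    have hd1 : (∑ u ∈ S i0, ∑ v ∈ (S i0)ᶜ, w u v / gVol deg (S i0))
        = gCut w (S i0) ((S i0)ᶜ) / gVol deg (S i0) := by
      rw [gCut, Finset.sum_div]
      exact Finset.sum_congr rfl fun u _ => (Finset.sum_div _ _ _).symm
    have hd2 : (∑ u ∈ (S i0)ᶜ, ∑ v ∈ S i0, w u v / gVol deg (S i0))
        = gCut w (S i0) ((S i0)ᶜ) / gVol deg (S i0) := by
      rw [← hcutsymm i0, gCut, Finset.sum_div]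
      exact Finset.sum_congr rfl fun u _ => (Finset.sum_div _ _ _).symm
    rw [hd1, hd2]
    ring
  -- the Rayleigh quotient is at most rho
  have hcutnn : ∀ i0 : Fin k, 0 ≤ gCut w (S i0) ((S i0)ᶜ) :=
    fun i0 => Finset.sum_nonneg fun u _ => Finset.sum_nonneg fun v _ => hnonneg u v
  have hvolc : ∀ i0 j0 : Fin k, i0 ≠ j0 → 0 < gVol deg ((S i0)ᶜ) := by
    intro i0 j0 hne
    have hsub : S j0 ⊆ (S i0)ᶜ := by
      intro v hv
      rw [Finset.mem_compl]
      exact fun hv' => (Finset.disjoint_left.mp (hS.2.1 i0 j0 hne)) hv' hv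
    calc (0:ℝ) < gVol deg (S j0) := hvolpos j0
      _ ≤ gVol deg ((S i0)ᶜ) :=
        Finset.sum_le_sum_of_subset_of_nonneg hsub fun u _ _ => (hdegpos u).le
  have hRle : ∀ i0 j0 : Fin k, i0 ≠ j0 →
      ∑ t, lam t * (⟪f t, gbar i0⟫ : ℝ) ^ 2 ≤ rho := by
    intro i0 j0 hne
    rw [hRay i0]
    have h1 : gCut w (S i0) ((S i0)ᶜ) / gVol deg (S i0) ≤ gCond w deg (S i0) := by
      rw [gCond]
      exact div_le_div_of_nonneg_left (hcutnn i0)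
        (lt_min (hvolpos i0) (hvolc i0 j0 hne)) (min_le_left _ _)
    have h2 : gCond w deg (S i0) ≤ rho := by
      rw [hrho]
      exact le_ciSup (f := fun i1 => gCond w deg (S i1)) (Set.Finite.bddAbove (Set.finite_range _)) i0
    linarith
  -- Parseval consequences
  have hsum1 : ∀ i0 : Fin k, ∑ t, (⟪f t, gbar i0⟫ : ℝ) ^ 2 = 1 := by
    intro i0
    have h := hpars (gbar i0) (gbar i0)
    rw [real_inner_self_eq_norm_sq, hgunit i0] at h
    simpa [sq] using h
  have horth : ∑ t, (⟪f t, gbar i⟫ : ℝ) * ⟪f t, gbar j⟫ = 0 := by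
    have h := hpars (gbar i) (gbar j)
    have hz : (⟪gbar i, gbar j⟫ : ℝ) = 0 := by
      rw [hinner]
      refine Finset.sum_eq_zero fun u _ => ?_
      rw [hgbar_apply i, hgbar_apply j]
      by_cases hu : u ∈ S i
      · have hu' : u ∉ S j := Finset.disjoint_left.mp (hS.2.1 i j hij) hu
        simp [hu, hu']
      · simp [hu]
    rw [hz] at h
    exact h
  -- head and tail sums
  have hsplitsum : ∀ F : Fin n → ℝ,
      (∑ t ∈ univ.filter (fun t : Fin n => (t : ℕ) < k), F t)
        + ∑ t ∈ univ.filter (fun t : Fin n => ¬ (t : ℕ) < k), F t = ∑ t, F t :=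
    fun F => Finset.sum_filter_add_sum_filter_not _ _ _
  have hUpos : (0:ℝ) < Upsilon := lt_of_lt_of_le (by norm_num) hU20
  have heps : rho / lam ⟨k, hkn⟩ = Upsilon⁻¹ := by rw [hU, inv_div]
  have htail : ∀ i0 j0 : Fin k, i0 ≠ j0 →
      ∑ t ∈ univ.filter (fun t : Fin n => ¬ (t : ℕ) < k), (⟪f t, gbar i0⟫ : ℝ) ^ 2
        ≤ Upsilon⁻¹ := by
    intro i0 j0 hne
    have h1 : lam ⟨k, hkn⟩ *
        ∑ t ∈ univ.filter (fun t : Fin n => ¬ (t : ℕ) < k), (⟪f t, gbar i0⟫ : ℝ) ^ 2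
        ≤ ∑ t, lam t * (⟪f t, gbar i0⟫ : ℝ) ^ 2 := by
      rw [Finset.mul_sum]
      calc ∑ t ∈ univ.filter (fun t : Fin n => ¬ (t : ℕ) < k),
            lam ⟨k, hkn⟩ * (⟪f t, gbar i0⟫ : ℝ) ^ 2
          ≤ ∑ t ∈ univ.filter (fun t : Fin n => ¬ (t : ℕ) < k),
            lam t * (⟪f t, gbar i0⟫ : ℝ) ^ 2 := by
            refine Finset.sum_le_sum fun t ht => ?_
            have hkt : (⟨k, hkn⟩ : Fin n) ≤ t := by
              rw [Fin.le_def]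
              exact Nat.not_lt.mp (Finset.mem_filter.mp ht).2
            exact mul_le_mul_of_nonneg_right (hlam hkt) (sq_nonneg _)
        _ ≤ ∑ t, lam t * (⟪f t, gbar i0⟫ : ℝ) ^ 2 :=
            Finset.sum_le_sum_of_subset_of_nonneg (Finset.filter_subset _ _)
              fun t _ _ => mul_nonneg (hlamnn t) (sq_nonneg _)
    have h2 := hRle i0 j0 hne
    rw [← heps, le_div_iff₀ hlampos, mul_comm]
    linarith
  have htailnn : ∀ i0 : Fin k,
      0 ≤ ∑ t ∈ univ.filter (fun t : Fin n => ¬ (t : ℕ) < k), (⟪f t, gbar i0⟫ : ℝ) ^ 2 :=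
    fun i0 => Finset.sum_nonneg fun t _ => sq_nonneg _
  have hheadnn : ∀ i0 : Fin k,
      0 ≤ ∑ t ∈ univ.filter (fun t : Fin n => (t : ℕ) < k), (⟪f t, gbar i0⟫ : ℝ) ^ 2 :=
    fun i0 => Finset.sum_nonneg fun t _ => sq_nonneg _
  have hhead : ∀ i0 j0 : Fin k, i0 ≠ j0 → 1 - Upsilon⁻¹ ≤
      ∑ t ∈ univ.filter (fun t : Fin n => (t : ℕ) < k), (⟪f t, gbar i0⟫ : ℝ) ^ 2 := by
    intro i0 j0 hne
    have h1 := hsplitsum (fun t => (⟪f t, gbar i0⟫ : ℝ) ^ 2)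
    rw [hsum1 i0] at h1
    have h2 := htail i0 j0 hne
    linarith
  -- the head inner product is small
  have hH : ∑ t ∈ univ.filter (fun t : Fin n => (t : ℕ) < k),
      (⟪f t, gbar i⟫ : ℝ) * ⟪f t, gbar j⟫ ≤ Upsilon⁻¹ := by
    have h1 := hsplitsum (fun t => (⟪f t, gbar i⟫ : ℝ) * ⟪f t, gbar j⟫)
    rw [horth] at h1
    have hCS := Finset.sum_mul_sq_le_sq_mul_sq
      (univ.filter (fun t : Fin n => ¬ (t : ℕ) < k))
      (fun t => (⟪f t, gbar i⟫ : ℝ)) (fun t => (⟪f t, gbar j⟫ : ℝ))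
    have hti := htail i j hij
    have htj := htail j i hij.symm
    have hepos : (0:ℝ) < Upsilon⁻¹ := inv_pos.mpr hUpos
    nlinarith [htailnn i, htailnn j,
      sq_nonneg (∑ t ∈ univ.filter (fun t : Fin n => ¬ (t : ℕ) < k),
        (⟪f t, gbar i⟫ : ℝ) * ⟪f t, gbar j⟫ + Upsilon⁻¹)]
  -- reindex head sums over `Fin k`
  have hreidx : ∀ F : Fin n → ℝ,
      ∑ t ∈ univ.filter (fun t : Fin n => (t : ℕ) < k), F t
        = ∑ j' : Fin k, F (Fin.castLE hkn.le j') := by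
    intro F
    have himg : univ.filter (fun t : Fin n => (t : ℕ) < k)
        = Finset.image (Fin.castLE hkn.le) univ := by
      ext t
      simp only [Finset.mem_image, Finset.mem_filter, Finset.mem_univ, true_and]
      constructor
      · intro ht; exact ⟨⟨t.1, ht⟩, rfl⟩
      · rintro ⟨a, rfl⟩; exact a.2
    rw [himg, Finset.sum_image fun a _ b _ h => Fin.castLE_injective _ h]
  -- inner products and norms of the centres
  have hipij : (⟪p i, p j⟫ : ℝ) =
      (∑ t ∈ univ.filter (fun t : Fin n => (t : ℕ) < k), (⟪f t, gbar i⟫ : ℝ) * ⟪f t, gbar j⟫)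
        / (Real.sqrt (gVol deg (S i)) * Real.sqrt (gVol deg (S j))) := by
    rw [hinnerk, hreidx (fun t => (⟪f t, gbar i⟫ : ℝ) * ⟪f t, gbar j⟫), Finset.sum_div]
    refine Finset.sum_congr rfl fun j' _ => ?_
    rw [hp i j', hp j j']
    rw [div_mul_div_comm]
  have hnp : ∀ i0 : Fin k, ‖p i0‖ ^ 2 =
      (∑ t ∈ univ.filter (fun t : Fin n => (t : ℕ) < k), (⟪f t, gbar i0⟫ : ℝ) ^ 2)
        / gVol deg (S i0) := by
    intro i0
    rw [hnormsqk, hreidx (fun t => (⟪f t, gbar i0⟫ : ℝ) ^ 2), Finset.sum_div]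
    refine Finset.sum_congr rfl fun j' _ => ?_
    rw [hp i0 j', div_pow, Real.sq_sqrt (hvolpos i0).le]
  -- final numeric computation
  set e := Upsilon⁻¹ with he
  have hepos : (0:ℝ) < e := inv_pos.mpr hUpos
  have hele : e ≤ 1/20 := by
    rw [he]
    have := one_div_le_one_div_of_le (by norm_num : (0:ℝ) < 20) hU20
    simpa [one_div] using this
  have hi' := hhead i j hij
  have hj' := hhead j i hij.symm
  set Hi := ∑ t ∈ univ.filter (fun t : Fin n => (t : ℕ) < k), (⟪f t, gbar i⟫ : ℝ) ^ 2 with hHi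
  set Hj := ∑ t ∈ univ.filter (fun t : Fin n => (t : ℕ) < k), (⟪f t, gbar j⟫ : ℝ) ^ 2 with hHj
  set HH := ∑ t ∈ univ.filter (fun t : Fin n => (t : ℕ) < k),
    (⟪f t, gbar i⟫ : ℝ) * ⟪f t, gbar j⟫ with hHH
  have hHipos : 0 < Hi := lt_of_lt_of_le (by linarith) hi'
  have hHjpos : 0 < Hj := lt_of_lt_of_le (by linarith) hj'
  have hpin : ‖p i‖ ^ 2 = Hi / gVol deg (S i) := hnp i
  have hpjn : ‖p j‖ ^ 2 = Hj / gVol deg (S j) := hnp j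
  have hpipos : 0 < ‖p i‖ := by
    have h1 : 0 < ‖p i‖ ^ 2 := by rw [hpin]; exact div_pos hHipos (hvolpos i)
    have h2 := norm_nonneg (p i)
    nlinarith
  have hpjpos : 0 < ‖p j‖ := by
    have h1 : 0 < ‖p j‖ ^ 2 := by rw [hpjn]; exact div_pos hHjpos (hvolpos j)
    have h2 := norm_nonneg (p j)
    nlinarith
  have hnormpi : ‖p i‖ = Real.sqrt Hi / Real.sqrt (gVol deg (S i)) := by
    rw [← Real.sqrt_sq (norm_nonneg (p i)), hpin, Real.sqrt_div hHipos.le]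
  have hnormpj : ‖p j‖ = Real.sqrt Hj / Real.sqrt (gVol deg (S j)) := by
    rw [← Real.sqrt_sq (norm_nonneg (p j)), hpjn, Real.sqrt_div hHjpos.le]
  have hsHi : Real.sqrt Hi ≠ 0 := (Real.sqrt_pos.mpr hHipos).ne'
  have hsHj : Real.sqrt Hj ≠ 0 := (Real.sqrt_pos.mpr hHjpos).ne'
  have hab : (⟪‖p i‖⁻¹ • p i, ‖p j‖⁻¹ • p j⟫ : ℝ)
      = HH / (Real.sqrt Hi * Real.sqrt Hj) := by
    rw [real_inner_smul_left, real_inner_smul_right, hipij, hnormpi, hnormpj]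
    have h1 := hvs i
    have h2 := hvs j
    field_simp
  have hDpos : 0 < Real.sqrt Hi * Real.sqrt Hj :=
    mul_pos (Real.sqrt_pos.mpr hHipos) (Real.sqrt_pos.mpr hHjpos)
  have h1e : (0:ℝ) < 1 - e := by linarith
  have hDge : 1 - e ≤ Real.sqrt Hi * Real.sqrt Hj := by
    calc 1 - e = Real.sqrt (1 - e) * Real.sqrt (1 - e) := (Real.mul_self_sqrt h1e.le).symm
      _ ≤ Real.sqrt Hi * Real.sqrt Hj :=
        mul_le_mul (Real.sqrt_le_sqrt hi') (Real.sqrt_le_sqrt hj')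
          (Real.sqrt_nonneg _) (Real.sqrt_nonneg _)
  have habl : (⟪‖p i‖⁻¹ • p i, ‖p j‖⁻¹ • p j⟫ : ℝ) ≤ 10 / Upsilon := by
    rw [hab]
    have h10 : 10 / Upsilon = 10 * e := by rw [he, div_eq_mul_inv]
    rw [h10]
    rcases le_or_gt HH 0 with h | h
    · have hle0 : HH / (Real.sqrt Hi * Real.sqrt Hj) ≤ 0 :=
        div_nonpos_of_nonpos_of_nonneg h hDpos.le
      have h0 : (0:ℝ) ≤ 10 * e := by positivity
      linarith
    · have h2 : HH / (Real.sqrt Hi * Real.sqrt Hj) ≤ e / (1 - e) :=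
        div_le_div₀ hepos.le hH h1e hDge
      have h3 : e / (1 - e) ≤ 10 * e := by
        rw [div_le_iff₀ h1e]
        nlinarith
      linarith
  have ha1 : ‖‖p i‖⁻¹ • p i‖ = 1 := by
    rw [norm_smul, norm_inv, norm_norm]
    exact inv_mul_cancel₀ hpipos.ne'
  have hb1 : ‖‖p j‖⁻¹ • p j‖ = 1 := by
    rw [norm_smul, norm_inv, norm_norm]
    exact inv_mul_cancel₀ hpjpos.ne'
  rw [norm_sub_sq_real, ha1, hb1, one_pow]
  have h20 : 20 / Upsilon = 2 * (10 / Upsilon) := by ring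
  linarith
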